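/- Let B = (b_{ij}) be an n×n integer skew-symmetrizable matrix and h = max_{1≤i≤n} Σ_{j=1}^n |b_{ij}|. If h·i (where i = √−1) is a complex eigenvalue of B (equivalently, the exchange spectrum radius of B equals h), then there exists a nonempty subset S ⊆ {1,…,n} such that: (a) b_{ij} = 0 whenever i ∈ S and j ∉ S; (b) the underlying graph of B restricted to S is connected; and (c) Σ_{j∈S} |b_{ij}| = h for every i ∈ S. -/

import Mathlib

def SkewSymmetrizable {n : ℕ} (B : Matrix (Fin n) (Fin n) ℤ) : Prop :=
  ∃ d : Fin n → ℤ, (∀ i, 0 < d i) ∧ ∀ i j, d i * B i j = - (d j * B j i)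

lemma exists_eigvec {m : ℕ} (A : Matrix (Fin m) (Fin m) ℂ) (μ : ℂ) (hr : A.charpoly.IsRoot μ) :
    ∃ v : Fin m → ℂ, v ≠ 0 ∧ A.mulVec v = μ • v := by
  have hdet : (Matrix.diagonal (fun _ : Fin m => μ) - A).det = 0 := by
    have := hr
    rw [Polynomial.IsRoot, Matrix.charpoly, ← Polynomial.coe_evalRingHom,
      RingHom.map_det] at this
    convert this using 2
    ext i j
    by_cases hij : i = j
    · subst hij; simp [Matrix.charmatrix_apply_eq, Matrix.diagonal_apply_eq]
    · simp [Matrix.charmatrix_apply_ne _ _ _ hij, Matrix.diagonal_apply_ne _ hij]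
  obtain ⟨v, hv0, hv⟩ := (Matrix.exists_mulVec_eq_zero_iff).mpr hdet
  refine ⟨v, hv0, ?_⟩
  rw [Matrix.sub_mulVec] at hv
  have h2 : (Matrix.diagonal (fun _ : Fin m => μ)).mulVec v = μ • v := by
    ext i; simp [Matrix.mulVec_diagonal]
  rw [h2] at hv
  exact (sub_eq_zero.mp hv).symm

theorem stmt3 {n : ℕ} (B : Matrix (Fin n) (Fin n) ℤ) (hB : SkewSymmetrizable B)
    (h : ℤ) (hh : IsGreatest {x : ℤ | ∃ i : Fin n, x = ∑ j, |B i j|} h)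
    (heig : (Matrix.charpoly (B.map (Int.cast : ℤ → ℂ))).IsRoot ((h : ℂ) * Complex.I)) :
    ∃ S : Finset (Fin n), S.Nonempty ∧
      (∀ i ∈ S, ∀ j ∉ S, B i j = 0) ∧
      (∀ i ∈ S, ∀ j ∈ S,
        Relation.ReflTransGen (fun a b => a ∈ S ∧ b ∈ S ∧ B a b ≠ 0) i j) ∧
      (∀ i ∈ S, ∑ j ∈ S, |B i j| = h) := by
  classical
  obtain ⟨d, hdpos, hds⟩ := hB
  obtain ⟨⟨i0r, hi0r⟩, hub⟩ := hh
  have hh0 : (0 : ℤ) ≤ h := hi0r ▸ Finset.sum_nonneg (fun j _ => abs_nonneg _)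
  -- B symmetric support
  have hBsym : ∀ a b : Fin n, B a b ≠ 0 → B b a ≠ 0 := by
    intro a b hab hba
    have := hds a b
    rw [hba, mul_zero, neg_zero, mul_eq_zero] at this
    rcases this with hc | hc
    · exact absurd hc (hdpos a).ne'
    · exact hab hc
  obtain ⟨v, hv0, hv⟩ := exists_eigvec (B.map (Int.cast : ℤ → ℂ)) ((h : ℂ) * Complex.I) heig
  set f : Fin n → ℝ := fun i => ‖v i‖ with hf
  obtain ⟨i0, -, hmax⟩ := Finset.exists_max_image Finset.univ f ⟨i0r, Finset.mem_univ _⟩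
  set M : ℝ := f i0 with hM
  have hmax' : ∀ j, f j ≤ M := fun j => hmax j (Finset.mem_univ _)
  have hMpos : 0 < M := by
    obtain ⟨k, hk⟩ := Function.ne_iff.mp hv0
    calc (0:ℝ) < f k := by simpa [hf] using hk
    _ ≤ M := hmax' k
  -- key lemma for maximal-modulus rows
  have key : ∀ i : Fin n, f i = M →
      ((∑ j, |B i j| : ℤ) = h ∧ ∀ j, B i j ≠ 0 → f j = M) := by
    intro i hi
    have hrow : ∑ j, ((B i j : ℂ)) * v j = ((h : ℂ) * Complex.I) * v i := by
      have := congrFun hv i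
      simpa [Matrix.mulVec, dotProduct, Matrix.map_apply] using this
    have habs : ‖∑ j, ((B i j : ℂ)) * v j‖ = (h : ℝ) * M := by
      rw [hrow, norm_mul, norm_mul, Complex.norm_I, Complex.norm_intCast, mul_one, ← hi]
      rw [abs_of_nonneg (by exact_mod_cast hh0)]
    set s1 : ℝ := ∑ j, (|B i j| : ℝ) * f j with hs1
    set s2 : ℝ := ∑ j, (|B i j| : ℝ) with hs2
    have e1 : (h : ℝ) * M ≤ s1 := by
      rw [← habs]
      refine le_trans (norm_sum_le _ _) (le_of_eq ?_)
      refine Finset.sum_congr rfl fun j _ => ?_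
      rw [norm_mul, Complex.norm_intCast]
    have e2 : s1 ≤ s2 * M := by
      rw [hs2, Finset.sum_mul]
      refine Finset.sum_le_sum fun j _ => ?_
      exact mul_le_mul_of_nonneg_left (hmax' j) (by positivity)
    have e3 : s2 ≤ (h : ℝ) := by
      have := hub ⟨i, rfl⟩
      rw [hs2]
      exact_mod_cast this
    have e4 : s2 * M ≤ (h : ℝ) * M := mul_le_mul_of_nonneg_right e3 hMpos.le
    have eq2 : s2 * M = (h : ℝ) * M := le_antisymm e4 (e1.trans e2)
    have hs2h : s2 = (h : ℝ) := mul_right_cancel₀ hMpos.ne' eq2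
    have eq1 : s1 = s2 * M := le_antisymm e2 (eq2 ▸ e1)
    constructor
    · have : ((∑ j, |B i j| : ℤ) : ℝ) = (h : ℝ) := by push_cast; exact hs2h
      exact_mod_cast this
    · intro j hj
      have hzero : ∑ j, (|B i j| : ℝ) * (M - f j) = 0 := by
        have : ∑ j, (|B i j| : ℝ) * (M - f j) = s2 * M - s1 := by
          rw [hs1, hs2, Finset.sum_mul, ← Finset.sum_sub_distrib]
          exact Finset.sum_congr rfl fun j _ => by ring
        rw [this, eq1, sub_self]
      have := (Finset.sum_eq_zero_iff_of_nonneg (fun j _ =>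
        mul_nonneg (by positivity) (sub_nonneg.mpr (hmax' j)))).mp hzero j (Finset.mem_univ _)
      have habsj : (|B i j| : ℝ) ≠ 0 := by
        simp only [ne_eq, Int.cast_eq_zero, abs_eq_zero]
        exact hj
      have := (mul_eq_zero.mp this).resolve_left habsj
      linarith [this]
  -- the relation and set
  set R : Fin n → Fin n → Prop := fun a b => f a = M ∧ f b = M ∧ B a b ≠ 0 with hR
  set S : Finset (Fin n) := Finset.univ.filter (fun j => Relation.ReflTransGen R i0 j) with hS
  have hmemS : ∀ j, j ∈ S ↔ Relation.ReflTransGen R i0 j := by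
    intro j; simp [hS]
  have hSmax : ∀ j ∈ S, f j = M := by
    intro j hj
    rw [hmemS] at hj
    induction hj with
    | refl => rfl
    | tail _ hrel ih => exact hrel.2.1
  have hi0S : i0 ∈ S := (hmemS i0).mpr Relation.ReflTransGen.refl
  -- property (a)
  have hzero : ∀ i ∈ S, ∀ j ∉ S, B i j = 0 := by
    intro i hi j hj
    by_contra hBij
    have hfi := hSmax i hi
    have hfj := (key i hfi).2 j hBij
    have : j ∈ S := (hmemS j).mpr (((hmemS i).mp hi).tail ⟨hfi, hfj, hBij⟩)
    exact hj this
  -- R paths upgrade to S paths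
  set R' : Fin n → Fin n → Prop := fun a b => a ∈ S ∧ b ∈ S ∧ B a b ≠ 0 with hR'
  have hR'sym : ∀ a b, R' a b → R' b a := by
    rintro a b ⟨ha, hb, hab⟩
    exact ⟨hb, ha, hBsym a b hab⟩
  have upgrade : ∀ x, Relation.ReflTransGen R i0 x → Relation.ReflTransGen R' i0 x := by
    intro x hx
    induction hx with
    | refl => exact Relation.ReflTransGen.refl
    | @tail b c hb hrel ih =>
        have hbS : b ∈ S := (hmemS b).mpr hb
        have hcS : c ∈ S := (hmemS c).mpr (hb.tail hrel)
        exact ih.tail ⟨hbS, hcS, hrel.2.2⟩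
  have hconn : ∀ i ∈ S, ∀ j ∈ S, Relation.ReflTransGen R' i j := by
    intro i hi j hj
    have h1 : Relation.ReflTransGen R' i0 i := upgrade i ((hmemS i).mp hi)
    have h2 : Relation.ReflTransGen R' i0 j := upgrade j ((hmemS j).mp hj)
    exact ((@Relation.ReflTransGen.symmetric _ R' ⟨hR'sym⟩).symm _ _ h1).trans h2
  refine ⟨S, ⟨i0, hi0S⟩, hzero, hconn, ?_⟩
  intro i hi
  have hfi := hSmax i hi
  have hsum := (key i hfi).1
  rw [← hsum]
  exact Finset.sum_subset (Finset.subset_univ S)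
    (fun j _ hj => by rw [hzero i hi j hj, abs_zero])
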